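/- Let p ≥ 5 be a prime and let l ∈ ZMod p. The number of pairs (x,y) ∈ (ZMod p) × (ZMod p) with x² + xy + y² = l is: 2p - 1 if l = 0 and p ≡ 1 (mod 6); 1 if l = 0 and p ≡ 5 (mod 6); p - 1 if l ≠ 0 and p ≡ 1 (mod 6); and p + 1 if l ≠ 0 and p ≡ 5 (mod 6). -/

import Mathlib

open Finset
lemma aux_quadChar_sum_mul_shift {F : Type*} [Field F] [Fintype F] [DecidableEq F]
    (hF : ringChar F ≠ 2) (c : F) (hc : c ≠ 0) :
    ∑ t : F, quadraticChar F (t * (t + c)) = -1 := by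
  have key : ∑ t ∈ univ.erase (0 : F), quadraticChar F (t * (t + c))
      = ∑ s ∈ univ.erase (1 : F), quadraticChar F s := by
    refine Finset.sum_nbij' (i := fun t => 1 + c * t⁻¹) (j := fun s => c / (s - 1)) ?_ ?_ ?_ ?_ ?_
    · intro t ht
      simp only [mem_erase, mem_univ, and_true] at ht ⊢
      intro h
      have h0 : c * t⁻¹ = 0 := by linear_combination h
      rcases mul_eq_zero.mp h0 with h' | h'
      · exact hc h'
      · exact ht (inv_eq_zero.mp h')
    · intro s hs
      simp only [mem_erase, mem_univ, and_true] at hs ⊢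
      exact div_ne_zero hc (sub_ne_zero.mpr hs)
    · intro t ht
      simp only [mem_erase, mem_univ, and_true] at ht
      field_simp
      simp [hc]
    · intro s hs
      simp only [mem_erase, mem_univ, and_true] at hs
      have h1 : s - 1 ≠ 0 := sub_ne_zero.mpr hs
      field_simp
      ring
    · intro t ht
      simp only [mem_erase, mem_univ, and_true] at ht
      have h1 : t * (t + c) = t ^ 2 * (1 + c * t⁻¹) := by field_simp
      rw [h1, map_mul, quadraticChar_sq_one' ht, one_mul]
  have h0 : ∑ t : F, quadraticChar F (t * (t + c))
      = quadraticChar F (0 * (0 + c)) + ∑ t ∈ univ.erase (0 : F),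
          quadraticChar F (t * (t + c)) :=
    (Finset.add_sum_erase _ _ (mem_univ 0)).symm
  have h1 : ∑ s : F, quadraticChar F s
      = quadraticChar F 1 + ∑ s ∈ univ.erase (1 : F), quadraticChar F s :=
    (Finset.add_sum_erase _ _ (mem_univ 1)).symm
  rw [quadraticChar_sum_zero hF] at h1
  rw [h0, key, zero_mul, quadraticChar_zero, zero_add]
  have h2 : quadraticChar F (1 : F) = 1 := map_one _
  linarith

lemma aux_quadChar_sum_shift {F : Type*} [Field F] [Fintype F] [DecidableEq F]
    (hF : ringChar F ≠ 2) (m : F) :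
    ∑ t : F, quadraticChar F (t - m) = 0 := by
  have h := Equiv.sum_comp (Equiv.subRight m) (fun s => quadraticChar F s)
  simp only [Equiv.subRight_apply] at h
  rw [h, quadraticChar_sum_zero hF]

theorem count_x2_xy_y2_eq_l (p : ℕ) (hp : p.Prime) (hp5 : 5 ≤ p) (l : ZMod p) :
    (l = 0 → p % 6 = 1 →
      Nat.card {xy : ZMod p × ZMod p // xy.1 ^ 2 + xy.1 * xy.2 + xy.2 ^ 2 = l} = 2 * p - 1) ∧
    (l = 0 → p % 6 = 5 →
      Nat.card {xy : ZMod p × ZMod p // xy.1 ^ 2 + xy.1 * xy.2 + xy.2 ^ 2 = l} = 1) ∧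
    (l ≠ 0 → p % 6 = 1 →
      Nat.card {xy : ZMod p × ZMod p // xy.1 ^ 2 + xy.1 * xy.2 + xy.2 ^ 2 = l} = p - 1) ∧
    (l ≠ 0 → p % 6 = 5 →
      Nat.card {xy : ZMod p × ZMod p // xy.1 ^ 2 + xy.1 * xy.2 + xy.2 ^ 2 = l} = p + 1) := by
  haveI : Fact p.Prime := ⟨hp⟩
  have hchar : ringChar (ZMod p) ≠ 2 := by
    rw [ZMod.ringChar_zmod_n]; omega
  have h2 : (2 : ZMod p) ≠ 0 := by
    have h : ((2 : ℕ) : ZMod p) ≠ 0 := by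
      rw [Ne, ZMod.natCast_eq_zero_iff]
      intro h; have := Nat.le_of_dvd (by norm_num) h; omega
    simpa using h
  have h3 : (3 : ZMod p) ≠ 0 := by
    have h : ((3 : ℕ) : ZMod p) ≠ 0 := by
      rw [Ne, ZMod.natCast_eq_zero_iff]
      intro h; have := Nat.le_of_dvd (by norm_num) h; omega
    simpa using h
  have h4 : (4 : ZMod p) ≠ 0 := by
    intro h4
    have he : (4 : ZMod p) = 2 * 2 := by norm_num
    rcases mul_eq_zero.mp (he ▸ h4) with h' | h' <;> exact h2 h'
  have hN : Nat.card {xy : ZMod p × ZMod p // xy.1 ^ 2 + xy.1 * xy.2 + xy.2 ^ 2 = l}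
      = (univ.filter (fun xy : ZMod p × ZMod p =>
          xy.1 ^ 2 + xy.1 * xy.2 + xy.2 ^ 2 = l)).card := by
    rw [Nat.card_eq_fintype_card, Fintype.card_subtype]
  set N := (univ.filter (fun xy : ZMod p × ZMod p =>
      xy.1 ^ 2 + xy.1 * xy.2 + xy.2 ^ 2 = l)).card with hNdef
  set m : ZMod p := 4 * l * 3⁻¹ with hmdef
  have hmiff : m = 0 ↔ l = 0 := by
    constructor
    · intro h
      rcases mul_eq_zero.mp h with h' | h'
      · rcases mul_eq_zero.mp h' with h'' | h''
        · exact absurd h'' h4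
        · exact h''
      · exact absurd h' (inv_ne_zero h3)
    · intro h; rw [hmdef, h]; ring
  -- key identity
  have key : (N : ℤ) = p + quadraticChar (ZMod p) (-3)
      * (if l = 0 then (p : ℤ) - 1 else -1) := by
    have hfib : N = ∑ y : ZMod p,
        (univ.filter (fun x : ZMod p => x ^ 2 + x * y + y ^ 2 = l)).card := by
      rw [hNdef, Finset.card_eq_sum_card_fiberwise
        (f := fun xy : ZMod p × ZMod p => xy.2) (t := univ) (fun x _ => mem_univ _)]
      refine Finset.sum_congr rfl fun y _ => ?_
      refine Finset.card_nbij' (fun xy => xy.1) (fun x => (x, y)) ?_ ?_ ?_ ?_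
      · intro a ha; simp only [mem_coe, mem_filter, mem_univ, true_and] at ha ⊢
        obtain ⟨ha1, ha2⟩ := ha; rw [← ha2]; exact ha1
      · intro x hx; simp only [mem_coe, mem_filter, mem_univ, true_and] at hx ⊢
        exact ⟨hx, trivial⟩
      · intro a ha; simp only [mem_coe, mem_filter, mem_univ, true_and] at ha
        exact Prod.ext rfl ha.2.symm
      · intro x hx; rfl
    have hinner : ∀ y : ZMod p,
        ((univ.filter (fun x : ZMod p => x ^ 2 + x * y + y ^ 2 = l)).card : ℤ)
        = quadraticChar (ZMod p) (4 * l - 3 * y ^ 2) + 1 := by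
      intro y
      have hbij : (univ.filter (fun x : ZMod p => x ^ 2 + x * y + y ^ 2 = l)).card
          = (univ.filter (fun u : ZMod p => u ^ 2 = 4 * l - 3 * y ^ 2)).card := by
        refine Finset.card_nbij' (fun x => 2 * x + y) (fun u => (u - y) * 2⁻¹) ?_ ?_ ?_ ?_
        · intro x hx; simp only [mem_coe, mem_filter, mem_univ, true_and] at hx ⊢
          linear_combination 4 * hx
        · intro u hu; simp only [mem_coe, mem_filter, mem_univ, true_and] at hu ⊢
          field_simp
          linear_combination hu
        · intro x hx; field_simp
          ring
        · intro u hu; field_simp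
          ring
      rw [hbij]
      have h := quadraticChar_card_sqrts hchar (4 * l - 3 * y ^ 2)
      rw [← h]
      congr 1
      rw [Set.toFinset_setOf]
    have hsum : (N : ℤ) = (∑ y : ZMod p, quadraticChar (ZMod p) (4 * l - 3 * y ^ 2)) + p := by
      rw [hfib]
      push_cast
      rw [Finset.sum_congr rfl (fun y _ => hinner y), Finset.sum_add_distrib]
      simp [ZMod.card]
    have hfactor : ∀ y : ZMod p, quadraticChar (ZMod p) (4 * l - 3 * y ^ 2)
        = quadraticChar (ZMod p) (-3) * quadraticChar (ZMod p) (y ^ 2 - m) := by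
      intro y
      rw [← map_mul]
      congr 1
      rw [hmdef]
      field_simp
      ring
    rw [hsum, Finset.sum_congr rfl (fun y _ => hfactor y), ← Finset.mul_sum]
    have hS : (∑ y : ZMod p, quadraticChar (ZMod p) (y ^ 2 - m))
        = if l = 0 then (p : ℤ) - 1 else -1 := by
      by_cases hl : l = 0
      · have hm0 : m = 0 := hmiff.mpr hl
        rw [if_pos hl, hm0]
        have h0 : ∑ y : ZMod p, quadraticChar (ZMod p) (y ^ 2 - 0)
            = quadraticChar (ZMod p) ((0 : ZMod p) ^ 2 - 0)
              + ∑ y ∈ univ.erase (0 : ZMod p), quadraticChar (ZMod p) (y ^ 2 - 0) :=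
          (Finset.add_sum_erase _ _ (mem_univ 0)).symm
        rw [h0]
        have h1 : ∑ y ∈ univ.erase (0 : ZMod p), quadraticChar (ZMod p) (y ^ 2 - 0)
            = ∑ _y ∈ univ.erase (0 : ZMod p), (1 : ℤ) := by
          refine Finset.sum_congr rfl fun y hy => ?_
          simp only [mem_erase, mem_univ, and_true] at hy
          rw [sub_zero]
          exact quadraticChar_sq_one' hy
        rw [h1]
        have hq0 : quadraticChar (ZMod p) ((0:ZMod p) ^ 2 - 0) = 0 := by
          simp
        rw [hq0, Finset.sum_const, Finset.card_erase_of_mem (mem_univ _), nsmul_eq_mul,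
          mul_one, Finset.card_univ, ZMod.card]
        push_cast [Nat.cast_sub hp.one_lt.le]
        ring
      · have hm0 : m ≠ 0 := fun h => hl (hmiff.mp h)
        rw [if_neg hl]
        have hfibw : ∑ y : ZMod p, quadraticChar (ZMod p) (y ^ 2 - m)
            = ∑ t : ZMod p, ∑ y ∈ univ.filter (fun y : ZMod p => y ^ 2 = t),
                quadraticChar (ZMod p) (y ^ 2 - m) :=
          (Finset.sum_fiberwise_of_maps_to (fun y _ => mem_univ _) _).symm
        rw [hfibw]
        have hterm : ∀ t : ZMod p, ∑ y ∈ univ.filter (fun y : ZMod p => y ^ 2 = t),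
            quadraticChar (ZMod p) (y ^ 2 - m)
            = (quadraticChar (ZMod p) t + 1) * quadraticChar (ZMod p) (t - m) := by
          intro t
          have hconst : ∑ y ∈ univ.filter (fun y : ZMod p => y ^ 2 = t),
              quadraticChar (ZMod p) (y ^ 2 - m)
              = ∑ _y ∈ univ.filter (fun y : ZMod p => y ^ 2 = t),
                  quadraticChar (ZMod p) (t - m) := by
            refine Finset.sum_congr rfl fun y hy => ?_
            simp only [mem_filter, mem_univ, true_and] at hy
            rw [hy]
          rw [hconst, Finset.sum_const, nsmul_eq_mul]
          congr 1
          have h := quadraticChar_card_sqrts hchar t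
          rw [← h, Set.toFinset_setOf]
        rw [Finset.sum_congr rfl (fun t _ => hterm t)]
        have hsplit : ∀ t : ZMod p, (quadraticChar (ZMod p) t + 1)
            * quadraticChar (ZMod p) (t - m)
            = quadraticChar (ZMod p) (t * (t + -m)) + quadraticChar (ZMod p) (t - m) := by
          intro t
          rw [← sub_eq_add_neg, map_mul]
          ring
        rw [Finset.sum_congr rfl (fun t _ => hsplit t), Finset.sum_add_distrib,
          aux_quadChar_sum_mul_shift hchar (-m) (neg_ne_zero.mpr hm0),
          aux_quadChar_sum_shift hchar m]
        norm_num
    rw [hS]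
    ring
  -- determine χ(-3)
  have hneg3 : (-3 : ZMod p) ≠ 0 := neg_ne_zero.mpr h3
  have hchi1 : p % 6 = 1 → quadraticChar (ZMod p) (-3) = 1 := by
    intro hp6
    rw [quadraticChar_one_iff_isSquare hneg3]
    have hdvd : 3 ∣ Fintype.card (ZMod p)ˣ := by
      rw [ZMod.card_units]; omega
    haveI : Fact (Nat.Prime 3) := ⟨by norm_num⟩
    obtain ⟨g, hg⟩ := exists_prime_orderOf_dvd_card 3 hdvd
    have hg3 : (g : ZMod p) ^ 3 = 1 := by
      have hgg : g ^ 3 = 1 := by rw [← hg]; exact pow_orderOf_eq_one g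
      rw [← Units.val_pow_eq_pow_val, hgg, Units.val_one]
    have hg1 : (g : ZMod p) ≠ 1 := by
      intro h
      have hgu : g = 1 := Units.ext h
      rw [hgu, orderOf_one] at hg; norm_num at hg
    have hquad : (g : ZMod p) ^ 2 + (g : ZMod p) + 1 = 0 := by
      have hfac : ((g : ZMod p) - 1) * ((g : ZMod p) ^ 2 + (g : ZMod p) + 1) = 0 := by
        linear_combination hg3
      rcases mul_eq_zero.mp hfac with h | h
      · exact absurd (sub_eq_zero.mp h) hg1
      · exact h
    exact ⟨2 * (g : ZMod p) + 1, by linear_combination -4 * hquad⟩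
  have hchi5 : p % 6 = 5 → quadraticChar (ZMod p) (-3) = -1 := by
    intro hp6
    rw [quadraticChar_neg_one_iff_not_isSquare]
    rintro ⟨c, hc⟩
    set ω : ZMod p := (c - 1) * 2⁻¹ with hωdef
    have hquad : ω ^ 2 + ω + 1 = 0 := by
      rw [hωdef]
      field_simp
      linear_combination -hc
    have hω1 : ω ≠ 1 := by
      intro h
      rw [h] at hquad
      apply h3
      linear_combination hquad
    have hωmul : ω * ω ^ 2 = 1 := by linear_combination (ω - 1) * hquad
    set u : (ZMod p)ˣ := Units.mkOfMulEqOne ω (ω ^ 2) hωmul with hudef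
    have huω : (u : ZMod p) = ω := rfl
    have hu3 : u ^ 3 = 1 := by
      apply Units.ext
      show ((u ^ 3 : (ZMod p)ˣ) : ZMod p) = 1
      rw [Units.val_pow_eq_pow_val, huω]
      linear_combination (ω - 1) * hquad
    have hu1 : u ≠ 1 := by
      intro h
      apply hω1
      rw [← huω, h, Units.val_one]
    have hord : orderOf u = 3 := by
      have hdvd : orderOf u ∣ 3 := orderOf_dvd_of_pow_eq_one hu3
      have h13 : orderOf u = 1 ∨ orderOf u = 3 := (Nat.Prime.eq_one_or_self_of_dvd
        (by norm_num) _ hdvd).imp id id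
      rcases h13 with h | h
      · exact absurd (orderOf_eq_one_iff.mp h) hu1
      · exact h
    have hdvdcard : (3 : ℕ) ∣ Fintype.card (ZMod p)ˣ := hord ▸ orderOf_dvd_card
    rw [ZMod.card_units] at hdvdcard
    omega
  rw [hN]
  refine ⟨?_, ?_, ?_, ?_⟩
  · intro hl hp6
    rw [if_pos hl, hchi1 hp6] at key
    omega
  · intro hl hp6
    rw [if_pos hl, hchi5 hp6] at key
    omega
  · intro hl hp6
    rw [if_neg hl, hchi1 hp6] at key
    omega
  · intro hl hp6
    rw [if_neg hl, hchi5 hp6] at key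
    omega
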